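/- Let Π be a real m×n matrix, Π♯ a real n×m matrix with Π Π♯ = I_m, and let W be a symmetric positive semidefinite real n×n matrix satisfying the orthogonality condition (Π♯)ᵀ W (I_n − Π♯Π) = 0. Let b, y ∈ ℝⁿ, b̄ ∈ ℝᵐ, and set b̃ = Π♯ b̄ + (I_n − Π♯Π) y. Then (b − b̃)ᵀ W (b − b̃) = (Πb − b̄)ᵀ (Π♯)ᵀ W Π♯ (Πb − b̄) + ((I_n − Π♯Π)(b − y))ᵀ W ((I_n − Π♯Π)(b − y)). -/

import Mathlib

open Matrix

lemma mulVec_dot_mulVec_aux {k l n : ℕ} (M : Matrix (Fin n) (Fin k) ℝ)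
    (N : Matrix (Fin n) (Fin l) ℝ) (c : Fin k → ℝ) (d : Fin l → ℝ) :
    (M.mulVec c) ⬝ᵥ (N.mulVec d) = c ⬝ᵥ (M.transpose * N).mulVec d := by
  rw [← Matrix.mulVec_mulVec,
    show c ⬝ᵥ M.transpose.mulVec (N.mulVec d) = c ᵥ* M.transpose ⬝ᵥ (N.mulVec d) from
      Matrix.dotProduct_mulVec _ _ _,
    Matrix.vecMul_transpose]

theorem weighted_norm_splitting
    {m n : ℕ} (P : Matrix (Fin m) (Fin n) ℝ) (Ps : Matrix (Fin n) (Fin m) ℝ)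
    (hPs : P * Ps = 1)
    (W : Matrix (Fin n) (Fin n) ℝ) (hW : W.PosSemidef)
    (horth : Ps.transpose * W * ((1 : Matrix (Fin n) (Fin n) ℝ) - Ps * P) = 0)
    (b y : Fin n → ℝ) (bb : Fin m → ℝ)
    (bt : Fin n → ℝ)
    (hbt : bt = Ps.mulVec bb + ((1 : Matrix (Fin n) (Fin n) ℝ) - Ps * P).mulVec y) :
    (b - bt) ⬝ᵥ W.mulVec (b - bt)
      = (P.mulVec b - bb) ⬝ᵥ (Ps.transpose * W * Ps).mulVec (P.mulVec b - bb)
        + (((1 : Matrix (Fin n) (Fin n) ℝ) - Ps * P).mulVec (b - y)) ⬝ᵥ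
            W.mulVec (((1 : Matrix (Fin n) (Fin n) ℝ) - Ps * P).mulVec (b - y)) := by
  have hWs : W.transpose = W := by simpa [Matrix.IsSymm] using hW.1
  set a := P.mulVec b - bb with ha
  set u := Ps.mulVec a with hu
  set v := ((1 : Matrix (Fin n) (Fin n) ℝ) - Ps * P).mulVec (b - y) with hv
  have hsplit : b - bt = u + v := by
    subst hbt
    simp only [hu, hv, ha, Matrix.sub_mulVec, Matrix.mulVec_sub, Matrix.one_mulVec,
      ← Matrix.mulVec_mulVec]
    abel
  have hcross : u ⬝ᵥ W.mulVec v = 0 := by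
    rw [hu, hv, Matrix.mulVec_mulVec, mulVec_dot_mulVec_aux, ← Matrix.mul_assoc, horth]
    simp
  have hcross2 : v ⬝ᵥ W.mulVec u = 0 := by
    rw [Matrix.dotProduct_mulVec, ← Matrix.mulVec_transpose, hWs, dotProduct_comm]
    exact hcross
  have huu : u ⬝ᵥ W.mulVec u = a ⬝ᵥ (Ps.transpose * W * Ps).mulVec a := by
    rw [hu, Matrix.mulVec_mulVec, mulVec_dot_mulVec_aux, ← Matrix.mul_assoc]
  rw [hsplit, Matrix.mulVec_add, add_dotProduct, dotProduct_add,
    dotProduct_add, hcross, hcross2, huu]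
  ring
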